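/- Let k ≥ 2 and let n be sufficiently large. If q ≤ binom(⌈n/2⌉, k) · ln 2 / (2((1+ln 2)n + ln 2)), then the number of ⌈n/2⌉-element subsets of [n], each weighted by 2^{-binom(⌈n/2⌉,k)/(2q-1)}, is less than 1/2; i.e., binom(n, ⌈n/2⌉) · 2^{-binom(⌈n/2⌉,k)/(2q-1)} < 1/2. -/

import Mathlib

open Real

/-- Potential estimate for Waiter's win in the Waiter–Client non-2-colourability game:
for `k ≥ 2` and `n` sufficiently large, if `q ≤ C(⌈n/2⌉,k)·ln 2 / (2((1+ln 2)n + ln 2))`,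
then `C(n,⌈n/2⌉) · 2^{-C(⌈n/2⌉,k)/(2q-1)} < 1/2`. -/
theorem waiterClient_noncol_potential (k : ℕ) (hk : 2 ≤ k) :
    ∃ n₀ : ℕ, ∀ n : ℕ, n₀ ≤ n → ∀ q : ℕ, 0 < q →
      (q : ℝ) ≤ (((n + 1) / 2).choose k : ℝ) * Real.log 2 /
          (2 * ((1 + Real.log 2) * n + Real.log 2)) →
      (n.choose ((n + 1) / 2) : ℝ) *
        (2 : ℝ) ^ (-((((n + 1) / 2).choose k : ℝ)) / (2 * q - 1)) < 1 / 2 := by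
  refine ⟨1, fun n hn q hq hqle => ?_⟩
  set B : ℝ := (((n + 1) / 2).choose k : ℝ) with hB
  set D : ℝ := (1 + Real.log 2) * n + Real.log 2 with hD
  have hlog : 0 < Real.log 2 := Real.log_pos (by norm_num)
  have hn1 : (1:ℝ) ≤ n := by exact_mod_cast hn
  have hDpos : 0 < D := by
    have : (0:ℝ) < (1 + Real.log 2) * n := by nlinarith
    simp only [hD]; linarith
  have hq1 : (1:ℝ) ≤ q := by exact_mod_cast hq
  have hden : (0:ℝ) < 2 * q - 1 := by linarith
  have h1 : (q:ℝ) * (2 * D) ≤ B * Real.log 2 :=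
    (le_div_iff₀ (by positivity)).mp hqle
  have hexp : -B / (2 * q - 1) ≤ -D / Real.log 2 := by
    rw [div_le_div_iff₀ hden hlog]
    nlinarith [hDpos.le]
  have key : (2:ℝ) ^ (-B / (2 * q - 1)) ≤ Real.exp (-D) := by
    have h2 : (2:ℝ) ^ (-B / (2 * q - 1)) ≤ (2:ℝ) ^ (-D / Real.log 2) :=
      Real.rpow_le_rpow_of_exponent_le (by norm_num) hexp
    have h3 : (2:ℝ) ^ (-D / Real.log 2) = Real.exp (-D) := by
      rw [Real.rpow_def_of_pos (by norm_num : (0:ℝ) < 2)]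
      congr 1
      field_simp
    rwa [h3] at h2
  have hchoose : (n.choose ((n + 1) / 2) : ℝ) ≤ (2:ℝ) ^ n := by
    have hm : (n + 1) / 2 < n + 1 := by omega
    have : n.choose ((n + 1) / 2) ≤ 2 ^ n := by
      rw [← Nat.sum_range_choose n]
      exact Finset.single_le_sum (fun i _ => Nat.zero_le _) (Finset.mem_range.mpr hm)
    exact_mod_cast this
  have hpow : ((2:ℝ) ^ n) = Real.exp ((n : ℝ) * Real.log 2) := by
    rw [← Real.log_pow, Real.exp_log (by positivity)]
  have hbound : (n.choose ((n + 1) / 2) : ℝ) * (2:ℝ) ^ (-B / (2 * q - 1)) ≤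
      Real.exp ((n:ℝ) * Real.log 2) * Real.exp (-D) := by
    rw [← hpow]
    exact mul_le_mul hchoose key (Real.rpow_nonneg (by norm_num) _)
        (by positivity)
  calc (n.choose ((n + 1) / 2) : ℝ) * (2:ℝ) ^ (-B / (2 * q - 1))
      ≤ Real.exp ((n:ℝ) * Real.log 2) * Real.exp (-D) := hbound
    _ = Real.exp ((n:ℝ) * Real.log 2 - D) := by rw [← Real.exp_add]; ring_nf
    _ < Real.exp (-Real.log 2) := by
        apply Real.exp_lt_exp.mpr
        simp only [hD]; nlinarith
    _ = 1 / 2 := by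
        rw [Real.exp_neg, Real.exp_log (by norm_num : (0:ℝ) < 2)]; norm_num
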